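/- arXiv:1707.02209 — 8 statements merged into one kernel-verified Lean document; each statement's English description precedes it below -/
import Mathlib

section
/- Let v ∈ C¹(ℝ₊ × [0,1]) be such that there exists a constant v_min > 0 with v(t,x) ≥ v_min for all t ≥ 0, x ∈ [0,1], and such that v has Lipschitz derivatives on [0,T] × [0,1] for every T > 0. Let w ∈ C¹(ℝ₊ × [0,1]) satisfy ∂w/∂t(t,x) + v(t,x)·∂w/∂x(t,x) = 0 for all t ≥ 0, x ∈ [0,1], and w(t,0) = 0 for all t ≥ 0. Then w(t,x) = 0 for all x ∈ [0,1] and all t ≥ v_min⁻¹. -/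
open Set MeasureTheory intervalIntegral


lemma intAux {g : ℝ → ℝ} (hg : ContinuousOn g (Icc 0 1)) :
    IntervalIntegrable g volume 0 1 :=
  ContinuousOn.intervalIntegrable (by rwa [uIcc_of_le (by norm_num : (0:ℝ) ≤ 1)])

lemma measAux {g : ℝ → ℝ} (hg : ContinuousOn g (Icc 0 1)) :
    AEStronglyMeasurable g (volume.restrict (Set.uIoc (0:ℝ) 1)) := by
  rw [uIoc_of_le (by norm_num : (0:ℝ) ≤ 1)]
  exact (hg.mono Ioc_subset_Icc_self).aestronglyMeasurable measurableSet_Ioc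

/-- differentiation under the integral sign for the weighted energy -/
lemma energy_deriv (σ Bq T1 : ℝ) (hσ : 0 < σ) (w wt : ℝ → ℝ → ℝ)
    (hw : ∀ t ∈ Ici (0:ℝ), ContinuousOn (fun x => w t x) (Icc 0 1))
    (hwt : ∀ t ∈ Ici (0:ℝ), ContinuousOn (fun x => wt t x) (Icc 0 1))
    (hder : ∀ t ∈ Ici (0:ℝ), ∀ x ∈ Icc (0:ℝ) 1,
      HasDerivWithinAt (fun s => w s x) (wt t x) (Ici 0) t)
    (hB : ∀ s ∈ Icc (0:ℝ) T1, ∀ x ∈ Icc (0:ℝ) 1, |w s x| ≤ Bq ∧ |wt s x| ≤ Bq)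
    (t : ℝ) (ht : 0 < t) (htT : t + 1/2 ≤ T1) :
    HasDerivAt (fun s => ∫ x in (0:ℝ)..1, Real.exp (-σ*x) * (w s x)^2)
      (∫ x in (0:ℝ)..1, Real.exp (-σ*x) * (2 * w t x * wt t x)) t := by
  set r : ℝ := min t (1/2) with hr
  have hrpos : 0 < r := lt_min ht one_half_pos
  have hball : Metric.ball t r ⊆ Ioo 0 T1 := by
    intro s hs
    rw [Metric.mem_ball, Real.dist_eq] at hs
    have h1 := abs_lt.1 hs
    have h2 := min_le_left t (1/2:ℝ)
    have h3 := min_le_right t (1/2:ℝ)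
    constructor <;> [linarith; linarith]
  have hballIci : ∀ s ∈ Metric.ball t r, s ∈ Ici (0:ℝ) := fun s hs => (hball hs).1.le
  have key := intervalIntegral.hasDerivAt_integral_of_dominated_loc_of_deriv_le
    (𝕜 := ℝ) (μ := volume) (a := (0:ℝ)) (b := 1)
    (F := fun s x => Real.exp (-σ*x) * (w s x)^2)
    (F' := fun s x => Real.exp (-σ*x) * (2 * w s x * wt s x))
    (x₀ := t) (bound := fun _ => 2 * Bq * Bq) (Metric.ball_mem_nhds t hrpos)
    ?_ ?_ ?_ ?_ ?_ ?_
  · exact key.2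
  · -- measurability of F s for s near t
    filter_upwards [Metric.ball_mem_nhds t hrpos] with s hs
    exact measAux (((Real.continuous_exp.comp (continuous_const.mul continuous_id)).continuousOn).mul
      ((hw s (hballIci s hs)).pow 2))
  · exact intAux (((Real.continuous_exp.comp (continuous_const.mul continuous_id)).continuousOn).mul
      ((hw t ht.le).pow 2))
  · exact measAux (((Real.continuous_exp.comp (continuous_const.mul continuous_id)).continuousOn).mul
      ((continuousOn_const.mul (hw t ht.le)).mul (hwt t ht.le)))
  · -- bound
    refine Filter.Eventually.of_forall ?_
    intro x hx s hs
    have hxI : x ∈ Icc (0:ℝ) 1 := Ioc_subset_Icc_self (by rwa [uIoc_of_le (by norm_num : (0:ℝ) ≤ 1)] at hx)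
    have hsI : s ∈ Icc (0:ℝ) T1 := ⟨(hball hs).1.le, (hball hs).2.le⟩
    obtain ⟨hws, hwts⟩ := hB s hsI x hxI
    have hexp : |Real.exp (-σ*x)| ≤ 1 := by
      rw [abs_of_pos (Real.exp_pos _)]
      rw [show (1:ℝ) = Real.exp 0 by simp]
      apply Real.exp_le_exp.2
      nlinarith [hxI.1]
    have e1 : ‖Real.exp (-σ*x) * (2 * w s x * wt s x)‖
        = |Real.exp (-σ*x)| * (2 * (|w s x| * |wt s x|)) := by
      rw [Real.norm_eq_abs, abs_mul, abs_mul, abs_mul, abs_two]; ring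
    rw [e1]
    have h1 : |w s x| * |wt s x| ≤ Bq * Bq :=
      mul_le_mul hws hwts (abs_nonneg _) ((abs_nonneg _).trans hws)
    have h2 : |Real.exp (-σ*x)| * (2 * (|w s x| * |wt s x|)) ≤ 1 * (2 * (Bq * Bq)) := by
      apply mul_le_mul hexp (by linarith) (by positivity) one_pos.le
    simpa using h2.trans (by linarith)
  · exact intervalIntegrable_const
  · -- differentiability
    refine Filter.Eventually.of_forall ?_
    intro x hx s hs
    have hxI : x ∈ Icc (0:ℝ) 1 := Ioc_subset_Icc_self (by rwa [uIoc_of_le (by norm_num : (0:ℝ) ≤ 1)] at hx)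
    have hs0 : 0 < s := (hball hs).1
    have hdw : HasDerivAt (fun s => w s x) (wt s x) s :=
      (hder s hs0.le x hxI).hasDerivAt (Ici_mem_nhds hs0)
    have := (hdw.pow 2).const_mul (Real.exp (-σ*x))
    refine this.congr_deriv ?_
    push_cast
    ring

lemma energy_deriv_bound (σ C vmin : ℝ) (hσ : 0 < σ) (hvmin : 0 < vmin)
    (v vx w wt wx : ℝ → ℝ → ℝ) (t : ℝ)
    (hv : ContinuousOn (fun x => v t x) (Icc 0 1))
    (hvx : ContinuousOn (fun x => vx t x) (Icc 0 1))
    (hw : ContinuousOn (fun x => w t x) (Icc 0 1))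
    (hwx : ContinuousOn (fun x => wx t x) (Icc 0 1))
    (hvd : ∀ x ∈ Icc (0:ℝ) 1, HasDerivWithinAt (fun y => v t y) (vx t x) (Icc 0 1) x)
    (hwd : ∀ x ∈ Icc (0:ℝ) 1, HasDerivWithinAt (fun y => w t y) (wx t x) (Icc 0 1) x)
    (hpde : ∀ x ∈ Icc (0:ℝ) 1, wt t x + v t x * wx t x = 0)
    (hbc : w t 0 = 0)
    (hvlb : ∀ x ∈ Icc (0:ℝ) 1, vmin ≤ v t x)
    (hC : ∀ x ∈ Icc (0:ℝ) 1, vx t x ≤ C) :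
    (∫ x in (0:ℝ)..1, Real.exp (-σ*x) * (2 * w t x * wt t x))
      ≤ (C - σ*vmin) * ∫ x in (0:ℝ)..1, Real.exp (-σ*x) * (w t x)^2 := by
  have cexp : Continuous fun x : ℝ => Real.exp (-σ*x) :=
    Real.continuous_exp.comp (continuous_const.mul continuous_id)
  have hwtx : ∀ x ∈ Icc (0:ℝ) 1, wt t x = -(v t x * wx t x) := by
    intro x hx; have := hpde x hx; linarith
  have hwtcont : ContinuousOn (fun x => wt t x) (Icc 0 1) := by
    apply ContinuousOn.congr (f := fun x => -(v t x * wx t x)) ((hv.mul hwx).neg)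
    intro x hx; exact hwtx x hx
  -- the primitive for integration by parts
  have contG : ContinuousOn (fun x => Real.exp (-σ*x) * (v t x * (w t x)^2)) (Icc 0 1) :=
    cexp.continuousOn.mul (hv.mul (hw.pow 2))
  have contG' : ContinuousOn (fun x => Real.exp (-σ*x) *
      ((vx t x - σ * v t x) * (w t x)^2 + v t x * (2 * w t x * wx t x))) (Icc 0 1) :=
    cexp.continuousOn.mul (((hvx.sub (continuousOn_const.mul hv)).mul (hw.pow 2)).add
      (hv.mul ((continuousOn_const.mul hw).mul hwx)))
  have contP : ContinuousOn (fun x => Real.exp (-σ*x) *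
      ((vx t x - σ * v t x) * (w t x)^2)) (Icc 0 1) :=
    cexp.continuousOn.mul ((hvx.sub (continuousOn_const.mul hv)).mul (hw.pow 2))
  have derivG : ∀ x ∈ Ioo (0:ℝ) 1,
      HasDerivWithinAt (fun x => Real.exp (-σ*x) * (v t x * (w t x)^2))
        (Real.exp (-σ*x) * ((vx t x - σ * v t x) * (w t x)^2 + v t x * (2 * w t x * wx t x)))
        (Ioi x) x := by
    intro x hx
    have hmem : Icc (0:ℝ) 1 ∈ nhds x := Icc_mem_nhds hx.1 hx.2
    have hv' := (hvd x (Ioo_subset_Icc_self hx)).hasDerivAt hmem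
    have hw' := (hwd x (Ioo_subset_Icc_self hx)).hasDerivAt hmem
    have hexp : HasDerivAt (fun y => Real.exp (-σ*y)) (Real.exp (-σ*x) * (-σ * 1)) x :=
      ((hasDerivAt_id x).const_mul (-σ)).exp
    have h := hexp.mul (hv'.mul (hw'.pow 2))
    have h2 : HasDerivAt (fun x => Real.exp (-σ*x) * (v t x * (w t x)^2))
        (Real.exp (-σ*x) * ((vx t x - σ * v t x) * (w t x)^2 + v t x * (2 * w t x * wx t x))) x := by
      refine h.congr_deriv ?_
      push_cast
      simp only [Pi.mul_apply, Pi.pow_apply]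
      ring
    exact h2.hasDerivWithinAt
  have ftc : (∫ x in (0:ℝ)..1, Real.exp (-σ*x) *
        ((vx t x - σ * v t x) * (w t x)^2 + v t x * (2 * w t x * wx t x)))
      = Real.exp (-σ*1) * (v t 1 * (w t 1)^2) - Real.exp (-σ*0) * (v t 0 * (w t 0)^2) :=
    integral_eq_sub_of_hasDeriv_right_of_le (by norm_num) contG derivG (intAux contG')
  have hG0 : Real.exp (-σ*0) * (v t 0 * (w t 0)^2) = 0 := by simp [hbc]
  have hG1 : 0 ≤ Real.exp (-σ*1) * (v t 1 * (w t 1)^2) := by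
    have hv1 := hvlb 1 (by norm_num)
    exact mul_nonneg (Real.exp_pos _).le
      (mul_nonneg (le_trans hvmin.le hv1) (sq_nonneg _))
  have step1 : (∫ x in (0:ℝ)..1, Real.exp (-σ*x) * (2 * w t x * wt t x))
      = (∫ x in (0:ℝ)..1, Real.exp (-σ*x) * ((vx t x - σ * v t x) * (w t x)^2))
        - (∫ x in (0:ℝ)..1, Real.exp (-σ*x) *
            ((vx t x - σ * v t x) * (w t x)^2 + v t x * (2 * w t x * wx t x))) := by
    rw [← integral_sub (intAux contP) (intAux contG')]
    apply integral_congr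
    intro x hx
    rw [uIcc_of_le (by norm_num : (0:ℝ) ≤ 1)] at hx
    simp only
    rw [hwtx x hx]
    ring
  have step2 : (∫ x in (0:ℝ)..1, Real.exp (-σ*x) * ((vx t x - σ * v t x) * (w t x)^2))
      ≤ (C - σ*vmin) * ∫ x in (0:ℝ)..1, Real.exp (-σ*x) * (w t x)^2 := by
    rw [← intervalIntegral.integral_const_mul]
    apply integral_mono_on (by norm_num) (intAux contP)
      (intAux (continuousOn_const.mul (cexp.continuousOn.mul (hw.pow 2))))
    intro x hx
    have h1 : vx t x - σ * v t x ≤ C - σ * vmin := by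
      have := hC x hx
      have := mul_le_mul_of_nonneg_left (hvlb x hx) hσ.le
      linarith
    show Real.exp (-σ*x) * ((vx t x - σ * v t x) * (w t x)^2) ≤ (C - σ*vmin) * (Real.exp (-σ*x) * (w t x)^2)
    nlinarith [mul_nonneg (mul_nonneg (sub_nonneg.2 h1) (Real.exp_pos (-σ*x)).le)
      (sq_nonneg (w t x))]
  rw [step1, ftc, hG0]
  linarith

lemma sq_integral_zero {u : ℝ → ℝ} (hu : ContinuousOn u (Icc 0 1))
    (hI : (∫ x in (0:ℝ)..1, (u x)^2) = 0) : ∀ x ∈ Icc (0:ℝ) 1, u x = 0 := by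
  intro x1 hx1
  by_contra hne
  set c : ℝ := (u x1)^2 with hc
  have hcpos : 0 < c := lt_of_le_of_ne (sq_nonneg _) (Ne.symm (pow_ne_zero 2 hne))
  have hcx : ContinuousWithinAt (fun y => (u y)^2) (Icc 0 1) x1 := (hu.pow 2) x1 hx1
  have hS : (fun y => (u y)^2) ⁻¹' (Ioi (c/2)) ∈ nhdsWithin x1 (Icc 0 1) :=
    hcx (Ioi_mem_nhds (by linarith))
  obtain ⟨δ, hδpos, hδsub⟩ := Metric.mem_nhdsWithin_iff.1 hS
  set a : ℝ := max 0 (x1 - δ/2) with ha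
  set b : ℝ := min 1 (x1 + δ/2) with hb
  have hax : a ≤ x1 := max_le hx1.1 (by linarith)
  have hxb : x1 ≤ b := le_min hx1.2 (by linarith)
  have hab : a < b := by
    rcases lt_or_ge x1 1 with h | h
    · exact lt_of_le_of_lt hax (lt_min h (by linarith))
    · have hx1' : x1 = 1 := le_antisymm hx1.2 h
      have h1 : a < 1 := max_lt one_pos (by rw [hx1']; linarith)
      have h2 : (1:ℝ) ≤ b := le_min le_rfl (by rw [hx1']; linarith)
      linarith
  have hsub : Icc a b ⊆ Icc (0:ℝ) 1 :=
    Icc_subset_Icc (le_max_left _ _) (min_le_left _ _)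
  have hsubU : ∀ y ∈ Icc a b, c/2 ≤ (u y)^2 := by
    intro y hy
    have h1 : y ∈ Metric.ball x1 δ := by
      rw [Metric.mem_ball, Real.dist_eq, abs_lt]
      have := hy.1; have := hy.2
      have := le_max_right 0 (x1 - δ/2)
      have := min_le_right 1 (x1 + δ/2)
      constructor <;> linarith
    exact le_of_lt (hδsub ⟨h1, hsub hy⟩)
  have hu2 : IntervalIntegrable (fun y => (u y)^2) volume 0 1 := intAux (hu.pow 2)
  have huIcc : ∀ p q : ℝ, p ∈ Icc (0:ℝ) 1 → q ∈ Icc (0:ℝ) 1 →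
      IntervalIntegrable (fun y => (u y)^2) volume p q := by
    intro p q hp hq
    apply hu2.mono_set
    rw [uIcc_of_le (by norm_num : (0:ℝ) ≤ 1)]
    exact uIcc_subset_Icc hp hq
  have ha01 : 0 ≤ a := le_max_left _ _
  have hb01 : b ≤ 1 := min_le_left _ _
  have hsplit1 : (∫ y in (0:ℝ)..a, (u y)^2) + (∫ y in a..(1:ℝ), (u y)^2)
      = ∫ y in (0:ℝ)..1, (u y)^2 :=
    integral_add_adjacent_intervals (huIcc 0 a (by norm_num) ⟨ha01, by linarith⟩) (huIcc a 1 ⟨ha01, by linarith⟩ (by norm_num))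
  have hsplit2 : (∫ y in a..b, (u y)^2) + (∫ y in b..(1:ℝ), (u y)^2)
      = ∫ y in a..(1:ℝ), (u y)^2 :=
    integral_add_adjacent_intervals (huIcc a b ⟨ha01, by linarith⟩ ⟨by linarith, hb01⟩) (huIcc b 1 ⟨by linarith, hb01⟩ (by norm_num))
  have h1 : 0 ≤ ∫ y in (0:ℝ)..a, (u y)^2 :=
    integral_nonneg ha01 (fun y _ => sq_nonneg _)
  have h2 : 0 ≤ ∫ y in b..(1:ℝ), (u y)^2 :=
    integral_nonneg hb01 (fun y _ => sq_nonneg _)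
  have h3 : (b - a) * (c/2) ≤ ∫ y in a..b, (u y)^2 := by
    have := integral_mono_on hab.le (_root_.intervalIntegrable_const (c := c/2))
      (huIcc a b ⟨ha01, by linarith⟩ ⟨by linarith, hb01⟩) hsubU
    rwa [intervalIntegral.integral_const, smul_eq_mul] at this
  have hpos : 0 < (b - a) * (c/2) := by
    apply mul_pos (by linarith) (by linarith)
  linarith


/-- Finite-time extinction for the transport PDE `∂w/∂t + v ∂w/∂x = 0` on `[0,1]` with
transport velocity bounded below by `v_min > 0` and zero inflow data at `x = 0`:
the solution vanishes identically for all `t ≥ v_min⁻¹`. -/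
theorem stmt4 (vmin : ℝ) (hvmin : 0 < vmin)
    (v vt vx w wt wx : ℝ → ℝ → ℝ)
    (hvcont : ContinuousOn (fun q : ℝ × ℝ => v q.1 q.2) (Ici 0 ×ˢ Icc 0 1))
    (hvtcont : ContinuousOn (fun q : ℝ × ℝ => vt q.1 q.2) (Ici 0 ×ˢ Icc 0 1))
    (hvxcont : ContinuousOn (fun q : ℝ × ℝ => vx q.1 q.2) (Ici 0 ×ˢ Icc 0 1))
    (hvd : ∀ t ∈ Ici (0:ℝ), ∀ x ∈ Icc (0:ℝ) 1,
      HasDerivWithinAt (fun s => v s x) (vt t x) (Ici 0) t ∧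
      HasDerivWithinAt (fun y => v t y) (vx t x) (Icc 0 1) x)
    (hvlip : ∀ T > (0:ℝ), ∃ L : NNReal,
      LipschitzOnWith L (fun q : ℝ × ℝ => vt q.1 q.2) (Icc 0 T ×ˢ Icc 0 1) ∧
      LipschitzOnWith L (fun q : ℝ × ℝ => vx q.1 q.2) (Icc 0 T ×ˢ Icc 0 1))
    (hvlb : ∀ t ∈ Ici (0:ℝ), ∀ x ∈ Icc (0:ℝ) 1, vmin ≤ v t x)
    (hwcont : ContinuousOn (fun q : ℝ × ℝ => w q.1 q.2) (Ici 0 ×ˢ Icc 0 1))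
    (hwtcont : ContinuousOn (fun q : ℝ × ℝ => wt q.1 q.2) (Ici 0 ×ˢ Icc 0 1))
    (hwxcont : ContinuousOn (fun q : ℝ × ℝ => wx q.1 q.2) (Ici 0 ×ˢ Icc 0 1))
    (hwd : ∀ t ∈ Ici (0:ℝ), ∀ x ∈ Icc (0:ℝ) 1,
      HasDerivWithinAt (fun s => w s x) (wt t x) (Ici 0) t ∧
      HasDerivWithinAt (fun y => w t y) (wx t x) (Icc 0 1) x)
    (hpde : ∀ t ∈ Ici (0:ℝ), ∀ x ∈ Icc (0:ℝ) 1, wt t x + v t x * wx t x = 0)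
    (hbc : ∀ t ∈ Ici (0:ℝ), w t 0 = 0) :
    ∀ t : ℝ, vmin⁻¹ ≤ t → ∀ x ∈ Icc (0:ℝ) 1, w t x = 0 := by
  have h01 : (0:ℝ) ≤ 1 := by norm_num
  have slice : ∀ (g : ℝ → ℝ → ℝ), ContinuousOn (fun q : ℝ × ℝ => g q.1 q.2) (Ici 0 ×ˢ Icc 0 1) →
      ∀ t ∈ Ici (0:ℝ), ContinuousOn (fun x => g t x) (Icc 0 1) := by
    intro g hg t ht
    have : ContinuousOn ((fun q : ℝ × ℝ => g q.1 q.2) ∘ fun x => ((t:ℝ), x)) (Icc 0 1) :=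
      hg.comp ((continuous_const.prodMk continuous_id).continuousOn) (fun x hx => ⟨ht, hx⟩)
    exact this
  have cw := slice w hwcont
  have cwts := slice wt hwtcont
  have cv := slice v hvcont
  have cvx := slice vx hvxcont
  have cwx := slice wx hwxcont
  have hvinv : 0 < vmin⁻¹ := inv_pos.2 hvmin
  suffices hmain : ∀ t : ℝ, vmin⁻¹ < t → ∀ x ∈ Icc (0:ℝ) 1, w t x = 0 by
    intro t ht x hx
    rcases eq_or_lt_of_le ht with h | h
    · have htpos : 0 < t := by rw [← h]; exact hvinv
      have hcont : ContinuousWithinAt (fun s => w s x) (Ici 0) t :=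
        ((hwd t htpos.le x hx).1).continuousWithinAt
      have h1 : Filter.Tendsto (fun s => w s x) (nhdsWithin t (Ioi t)) (nhds (w t x)) :=
        hcont.mono_left (nhdsWithin_mono t (fun s hs => (htpos.trans hs).le))
      have h2 : Filter.Tendsto (fun s => w s x) (nhdsWithin t (Ioi t)) (nhds 0) := by
        apply Filter.Tendsto.congr' _ tendsto_const_nhds
        filter_upwards [self_mem_nhdsWithin] with s hs
        exact (hmain s (by rw [h]; exact hs) x hx).symm
      exact tendsto_nhds_unique h1 h2
    · exact hmain t h x hx
  intro t0 ht0
  have ht0pos : 0 < t0 := hvinv.trans ht0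
  -- bounds on the compact set
  have hKc : IsCompact (Icc (0:ℝ) (t0+1) ×ˢ Icc (0:ℝ) 1) := isCompact_Icc.prod isCompact_Icc
  have hKsub : (Icc (0:ℝ) (t0+1) ×ˢ Icc (0:ℝ) 1) ⊆ Ici 0 ×ˢ Icc 0 1 :=
    prod_mono Icc_subset_Ici_self subset_rfl
  obtain ⟨Bw, hBw⟩ := hKc.exists_bound_of_continuousOn (hwcont.mono hKsub)
  obtain ⟨Bwt, hBwt⟩ := hKc.exists_bound_of_continuousOn (hwtcont.mono hKsub)
  obtain ⟨C, hCb⟩ := hKc.exists_bound_of_continuousOn (hvxcont.mono hKsub)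
  set Bq : ℝ := max Bw Bwt with hBqdef
  have hBq : ∀ s ∈ Icc (0:ℝ) (t0+1), ∀ x ∈ Icc (0:ℝ) 1, |w s x| ≤ Bq ∧ |wt s x| ≤ Bq := by
    intro s hs x hx
    constructor
    · exact le_trans (by simpa using hBw (s, x) ⟨hs, hx⟩) (le_max_left _ _)
    · exact le_trans (by simpa using hBwt (s, x) ⟨hs, hx⟩) (le_max_right _ _)
  have hBq0 : 0 ≤ Bq :=
    le_trans (abs_nonneg _) (hBq 0 ⟨le_rfl, by linarith⟩ 0 (by norm_num)).1
  set I : ℝ := ∫ x in (0:ℝ)..1, (w t0 x)^2 with hIdef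
  set d : ℝ := (t0 + vmin⁻¹)/2 with hd
  have hd1 : vmin⁻¹ < d := by rw [hd]; linarith
  have hd2 : d < t0 := by rw [hd]; linarith
  have hdpos : 0 < d := hvinv.trans hd1
  set ε : ℝ := t0 - d with hεdef
  have hεpos : 0 < ε := by rw [hεdef]; linarith
  have hεlt : ε < t0 := by rw [hεdef]; linarith
  have hamain : 1 - vmin * d < 0 := by
    have h2 : vmin * vmin⁻¹ < vmin * d := mul_lt_mul_of_pos_left hd1 hvmin
    rw [mul_inv_cancel₀ (ne_of_gt hvmin)] at h2
    linarith
  have key : ∀ σ : ℝ, 0 < σ → I ≤ Bq^2 * Real.exp (σ * (1 - vmin*d) + C * d) := by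
    intro σ hσ
    have cE : Continuous fun y : ℝ => Real.exp (-σ*y) :=
      Real.continuous_exp.comp (continuous_const.mul continuous_id)
    set f : ℝ → ℝ := fun t => ∫ x in (0:ℝ)..1, Real.exp (-σ*x) * (w t x)^2 with hf
    set D : ℝ → ℝ := fun t => ∫ x in (0:ℝ)..1, Real.exp (-σ*x) * (2 * w t x * wt t x) with hDdef
    have hderiv : ∀ t ∈ Icc ε t0, HasDerivAt f (D t) t := by
      intro t htI
      exact energy_deriv σ Bq (t0+1) hσ w wt cw cwts
        (fun t ht x hx => (hwd t ht x hx).1) hBq t (lt_of_lt_of_le hεpos htI.1)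
        (by linarith [htI.2])
    have hDbound : ∀ t ∈ Icc ε t0, D t ≤ (C - σ*vmin) * f t := by
      intro t htI
      have ht0' : t ∈ Ici (0:ℝ) := le_trans hεpos.le htI.1
      exact energy_deriv_bound σ C vmin hσ hvmin v vx w wt wx t (cv t ht0') (cvx t ht0')
        (cw t ht0') (cwx t ht0')
        (fun x hx => (hvd t ht0' x hx).2) (fun x hx => (hwd t ht0' x hx).2)
        (fun x hx => hpde t ht0' x hx) (hbc t ht0') (fun x hx => hvlb t ht0' x hx)
        (fun x hx => le_trans (le_abs_self _)
          (by simpa using hCb (t, x) ⟨⟨ht0', by linarith [htI.2]⟩, hx⟩))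
    set g : ℝ → ℝ := fun t => f t * Real.exp ((σ*vmin - C)*t) with hgdef
    have hgd : ∀ t ∈ Icc ε t0,
        HasDerivAt g ((D t + (σ*vmin - C) * f t) * Real.exp ((σ*vmin - C)*t)) t := by
      intro t htI
      have h2 : HasDerivAt (fun t => Real.exp ((σ*vmin - C)*t))
          (Real.exp ((σ*vmin - C)*t) * ((σ*vmin - C) * 1)) t :=
        ((hasDerivAt_id t).const_mul (σ*vmin - C)).exp
      have h3 := (hderiv t htI).mul h2
      refine h3.congr_deriv ?_
      ring
    have hanti : AntitoneOn g (Icc ε t0) := by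
      apply antitoneOn_of_deriv_nonpos (convex_Icc ε t0)
      · exact fun t htI => ((hgd t htI).continuousAt).continuousWithinAt
      · intro t htI
        rw [interior_Icc] at htI
        exact ((hgd t (Ioo_subset_Icc_self htI)).differentiableAt).differentiableWithinAt
      · intro t htI
        rw [interior_Icc] at htI
        rw [(hgd t (Ioo_subset_Icc_self htI)).deriv]
        have hb := hDbound t (Ioo_subset_Icc_self htI)
        have h4 : D t + (σ*vmin - C) * f t ≤ 0 := by linarith
        have h5 := mul_le_mul_of_nonneg_right h4 (Real.exp_pos ((σ*vmin - C)*t)).le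
        simpa using h5
    have hge : g t0 ≤ g ε :=
      hanti (left_mem_Icc.2 hεlt.le) (right_mem_Icc.2 hεlt.le) hεlt.le
    have hfε : f ε ≤ Bq^2 := by
      have hmono : f ε ≤ ∫ _x in (0:ℝ)..1, Bq^2 := by
        apply intervalIntegral.integral_mono_on h01
          (intAux (cE.continuousOn.mul ((cw ε hεpos.le).pow 2)))
          (_root_.intervalIntegrable_const)
        intro x hx
        have hwb := (hBq ε ⟨hεpos.le, by linarith⟩ x hx).1
        have hexple : Real.exp (-σ*x) ≤ 1 := by
          rw [show (1:ℝ) = Real.exp 0 by simp]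
          apply Real.exp_le_exp.2
          nlinarith [hx.1]
        show Real.exp (-σ*x) * (w ε x)^2 ≤ Bq^2
        nlinarith [abs_nonneg (w ε x), sq_abs (w ε x), sq_nonneg (w ε x),
          Real.exp_pos (-σ*x)]
      simpa using hmono
    have hflb : Real.exp (-σ) * I ≤ f t0 := by
      rw [hIdef, ← intervalIntegral.integral_const_mul]
      apply intervalIntegral.integral_mono_on h01
        ((intAux ((cw t0 ht0pos.le).pow 2)).const_mul _)
        (intAux (cE.continuousOn.mul ((cw t0 ht0pos.le).pow 2)))
      intro x hx
      have hexp : Real.exp (-σ) ≤ Real.exp (-σ*x) := by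
        apply Real.exp_le_exp.2
        nlinarith [hx.2]
      exact mul_le_mul_of_nonneg_right hexp (sq_nonneg _)
    have e1 : (0:ℝ) < Real.exp ((σ*vmin - C)*t0) := Real.exp_pos _
    have hft0b : f t0 ≤ Bq^2 * Real.exp ((σ*vmin - C)*ε) / Real.exp ((σ*vmin - C)*t0) := by
      rw [le_div_iff₀ e1]
      calc f t0 * Real.exp ((σ*vmin - C)*t0) = g t0 := rfl
        _ ≤ g ε := hge
        _ ≤ Bq^2 * Real.exp ((σ*vmin - C)*ε) :=
            mul_le_mul_of_nonneg_right hfε (Real.exp_pos _).le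
    calc I = Real.exp σ * (Real.exp (-σ) * I) := by
            rw [← mul_assoc, ← Real.exp_add]; simp
      _ ≤ Real.exp σ * f t0 := mul_le_mul_of_nonneg_left hflb (Real.exp_pos σ).le
      _ ≤ Real.exp σ * (Bq^2 * Real.exp ((σ*vmin - C)*ε) / Real.exp ((σ*vmin - C)*t0)) :=
            mul_le_mul_of_nonneg_left hft0b (Real.exp_pos σ).le
      _ = Bq^2 * Real.exp (σ * (1 - vmin*d) + C * d) := by
            rw [show σ * (1 - vmin*d) + C * d
              = σ + ((σ*vmin - C)*ε - (σ*vmin - C)*t0) by rw [hεdef]; ring]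
            rw [Real.exp_add, Real.exp_sub]
            field_simp
  have hlim : Filter.Tendsto (fun σ : ℝ => Bq^2 * Real.exp (σ * (1 - vmin*d) + C * d))
      Filter.atTop (nhds 0) := by
    rw [show (0:ℝ) = Bq^2 * 0 by ring]
    apply Filter.Tendsto.const_mul
    apply Real.tendsto_exp_atBot.comp
    apply Filter.tendsto_atBot_add_const_right
    exact Filter.tendsto_id.atTop_mul_const_of_neg hamain
  have hI0 : I ≤ 0 := by
    apply ge_of_tendsto hlim
    filter_upwards [Filter.eventually_gt_atTop 0] with σ hσ
    exact key σ hσ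
  have hInn : 0 ≤ I := intervalIntegral.integral_nonneg h01 (fun x _ => sq_nonneg _)
  exact fun x hx => sq_integral_zero (cw t0 ht0pos.le) (le_antisymm hI0 hInn) x hx
end

section
/- Let c > 0, ρ_eq > 0 and K > 0 be constants, and let ρ, v ∈ C¹(ℝ₊ × [0,1]) with ρ(t,x) > 0 and c + v(t,x) > 0 for all (t,x) ∈ ℝ₊ × [0,1], satisfying ∂ρ/∂t(t,x) + v(t,x)·∂ρ/∂x(t,x) + ρ(t,x)·∂v/∂x(t,x) = 0 and ∂v/∂t(t,x) − c·∂v/∂x(t,x) = 0 for all (t,x) ∈ ℝ₊ × [0,1]. Define w(t,x) := ln(ρ(t,x)·(c + v(t,x))/(K·ρ_eq)). Then w ∈ C¹(ℝ₊ × [0,1]) and ∂w/∂t(t,x) + v(t,x)·∂w/∂x(t,x) = 0 for all (t,x) ∈ ℝ₊ × [0,1]. -/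
open Set

/-- The nonlinear change of variables `w = ln (ρ (c + v) / (K ρeq))` transforms the
vehicle conservation law `∂ρ/∂t + v ∂ρ/∂x + ρ ∂v/∂x = 0` coupled with the backward
transport equation `∂v/∂t - c ∂v/∂x = 0` into the forward transport equation
`∂w/∂t + v ∂w/∂x = 0`, and `w` is `C¹` on `ℝ₊ × [0,1]`. -/
theorem stmt8 (c ρeq K : ℝ) (hc : 0 < c) (hρeq : 0 < ρeq) (hK : 0 < K)
    (ρ v ρt ρx vt vx : ℝ → ℝ → ℝ)
    (hρcont : ContinuousOn (fun q : ℝ × ℝ => ρ q.1 q.2) (Ici 0 ×ˢ Icc 0 1))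
    (hvcont : ContinuousOn (fun q : ℝ × ℝ => v q.1 q.2) (Ici 0 ×ˢ Icc 0 1))
    (hρtcont : ContinuousOn (fun q : ℝ × ℝ => ρt q.1 q.2) (Ici 0 ×ˢ Icc 0 1))
    (hρxcont : ContinuousOn (fun q : ℝ × ℝ => ρx q.1 q.2) (Ici 0 ×ˢ Icc 0 1))
    (hvtcont : ContinuousOn (fun q : ℝ × ℝ => vt q.1 q.2) (Ici 0 ×ˢ Icc 0 1))
    (hvxcont : ContinuousOn (fun q : ℝ × ℝ => vx q.1 q.2) (Ici 0 ×ˢ Icc 0 1))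
    (hpos : ∀ t ∈ Ici (0:ℝ), ∀ x ∈ Icc (0:ℝ) 1, 0 < ρ t x ∧ 0 < c + v t x)
    (hd : ∀ t ∈ Ici (0:ℝ), ∀ x ∈ Icc (0:ℝ) 1,
      HasDerivWithinAt (fun s => ρ s x) (ρt t x) (Ici 0) t ∧
      HasDerivWithinAt (fun y => ρ t y) (ρx t x) (Icc 0 1) x ∧
      HasDerivWithinAt (fun s => v s x) (vt t x) (Ici 0) t ∧
      HasDerivWithinAt (fun y => v t y) (vx t x) (Icc 0 1) x)
    (hpde1 : ∀ t ∈ Ici (0:ℝ), ∀ x ∈ Icc (0:ℝ) 1,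
      ρt t x + v t x * ρx t x + ρ t x * vx t x = 0)
    (hpde2 : ∀ t ∈ Ici (0:ℝ), ∀ x ∈ Icc (0:ℝ) 1, vt t x - c * vx t x = 0) :
    ∃ wt wx : ℝ → ℝ → ℝ,
      ContinuousOn
        (fun q : ℝ × ℝ => Real.log (ρ q.1 q.2 * (c + v q.1 q.2) / (K * ρeq)))
        (Ici 0 ×ˢ Icc 0 1) ∧
      ContinuousOn (fun q : ℝ × ℝ => wt q.1 q.2) (Ici 0 ×ˢ Icc 0 1) ∧
      ContinuousOn (fun q : ℝ × ℝ => wx q.1 q.2) (Ici 0 ×ˢ Icc 0 1) ∧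
      ∀ t ∈ Ici (0:ℝ), ∀ x ∈ Icc (0:ℝ) 1,
        HasDerivWithinAt (fun s => Real.log (ρ s x * (c + v s x) / (K * ρeq)))
          (wt t x) (Ici 0) t ∧
        HasDerivWithinAt (fun y => Real.log (ρ t y * (c + v t y) / (K * ρeq)))
          (wx t x) (Icc 0 1) x ∧
        wt t x + v t x * wx t x = 0 := by
  have hρne : ∀ q ∈ (Ici (0:ℝ) ×ˢ Icc (0:ℝ) 1), ρ q.1 q.2 ≠ 0 := fun q hq =>
    (hpos q.1 hq.1 q.2 hq.2).1.ne'
  have hvne : ∀ q ∈ (Ici (0:ℝ) ×ˢ Icc (0:ℝ) 1), c + v q.1 q.2 ≠ 0 := fun q hq =>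
    (hpos q.1 hq.1 q.2 hq.2).2.ne'
  have hKρ : K * ρeq ≠ 0 := by positivity
  refine ⟨fun t x => ρt t x / ρ t x + vt t x / (c + v t x),
          fun t x => ρx t x / ρ t x + vx t x / (c + v t x), ?_, ?_, ?_, ?_⟩
  · apply ContinuousOn.log
    · exact (hρcont.mul (continuousOn_const.add hvcont)).div_const _
    · intro q hq
      have := (hpos q.1 hq.1 q.2 hq.2)
      have : 0 < ρ q.1 q.2 * (c + v q.1 q.2) / (K * ρeq) := by
        exact div_pos (mul_pos this.1 this.2) (by positivity)
      exact this.ne'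
  · exact (hρtcont.div hρcont hρne).add
      (hvtcont.div (continuousOn_const.add hvcont) hvne)
  · exact (hρxcont.div hρcont hρne).add
      (hvxcont.div (continuousOn_const.add hvcont) hvne)
  · intro t ht x hx
    obtain ⟨hdρt, hdρx, hdvt, hdvx⟩ := hd t ht x hx
    obtain ⟨hρ0, hv0⟩ := hpos t ht x hx
    have hprod : 0 < ρ t x * (c + v t x) / (K * ρeq) := by positivity
    refine ⟨?_, ?_, ?_⟩
    · have h1 := (hdρt.mul ((hasDerivWithinAt_const t (Ici (0:ℝ)) c).add hdvt)).div_const (K * ρeq)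
      have h2 := h1.log hprod.ne'
      convert h2 using 1
      · rfl
      simp only [Pi.mul_apply, Pi.add_apply, zero_add]
      field_simp
    · have h1 := (hdρx.mul ((hasDerivWithinAt_const x (Icc (0:ℝ) 1) c).add hdvx)).div_const (K * ρeq)
      have h2 := h1.log hprod.ne'
      convert h2 using 1
      · rfl
      simp only [Pi.mul_apply, Pi.add_apply, zero_add]
      field_simp
    · have e1 := hpde1 t ht x hx
      have e2 := hpde2 t ht x hx
      have hvt : vt t x = c * vx t x := by linarith
      have hρt : ρt t x = -(v t x * ρx t x) - ρ t x * vx t x := by linarith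
      simp only [hvt, hρt]
      field_simp
      ring
end

section
/- Let A, b > 0, ρ_max > 0 and ε ∈ (0, ρ_max) with 1 ≤ b(ρ_max − ε), and let f(ρ) = A·exp(−bρ). Let h: ℝ₊ → ℝ be a non-decreasing function with h(s) = s for s ∈ [0, ρ_max − ε] and h(s) = ρ_max for s ≥ ρ_max. If q_eq > 0 satisfies A·ρ_max·exp(−b·ρ_max) ≤ q_eq ≤ (A/b)·exp(−1), then the equation ρ = h(q_eq/f(ρ)) has at least two distinct positive solutions: one solution in the interval (0, b⁻¹], and the solution ρ = ρ_max. -/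
open Set

/-- For the Underwood fundamental diagram `f ρ = A exp (-b ρ)` and the inlet saturation
function `h`, if `A ρmax exp(-b ρmax) ≤ q_eq ≤ (A/b) exp(-1)` and `1 ≤ b (ρmax - ε)`,
then the equilibrium equation `ρ = h (q_eq / f ρ)` has at least two distinct positive
solutions: one in `(0, b⁻¹]` and `ρ = ρmax`. -/
theorem stmt10 (A b ρmax ε : ℝ) (hA : 0 < A) (hb : 0 < b) (hρmax : 0 < ρmax)
    (hε : ε ∈ Ioo 0 ρmax) (h1 : 1 ≤ b * (ρmax - ε))
    (h : ℝ → ℝ) (hmono : MonotoneOn h (Ici 0))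
    (hid : ∀ s ∈ Icc (0:ℝ) (ρmax - ε), h s = s)
    (hsat : ∀ s, ρmax ≤ s → h s = ρmax)
    (qeq : ℝ) (hq : 0 < qeq)
    (hql : A * ρmax * Real.exp (-b * ρmax) ≤ qeq)
    (hqu : qeq ≤ A / b * Real.exp (-1)) :
    (∃ ρ₁ ∈ Ioc (0:ℝ) b⁻¹,
      ρ₁ = h (qeq / (A * Real.exp (-b * ρ₁))) ∧ ρ₁ ≠ ρmax) ∧
    ρmax = h (qeq / (A * Real.exp (-b * ρmax))) := by
  have hb' : (0:ℝ) < b⁻¹ := by positivity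
  have hinvb : b⁻¹ ≤ ρmax - ε := by
    rw [inv_le_iff_one_le_mul₀ hb, mul_comm]
    exact h1
  set g : ℝ → ℝ := fun ρ => qeq / (A * Real.exp (-b * ρ)) with hg
  have hgpos : ∀ ρ, 0 < g ρ := fun ρ => by positivity
  have hgcont : Continuous g := by
    apply Continuous.div continuous_const
    · exact continuous_const.mul ((continuous_const.mul continuous_id).rexp)
    · intro x; positivity
  -- bound g on [0, b⁻¹]
  have hgub : ∀ ρ ∈ Icc (0:ℝ) b⁻¹, g ρ ≤ b⁻¹ := by
    intro ρ hρ
    have hexp : Real.exp (-b * ρ) ≥ Real.exp (-1) := by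
      apply Real.exp_le_exp.mpr
      have : b * ρ ≤ 1 := by
        calc b * ρ ≤ b * b⁻¹ := by nlinarith [hρ.2]
        _ = 1 := mul_inv_cancel₀ hb.ne'
      linarith
    have : g ρ = qeq / (A * Real.exp (-b * ρ)) := rfl
    rw [this, div_le_iff₀ (by positivity)]
    calc qeq ≤ A / b * Real.exp (-1) := hqu
      _ = b⁻¹ * (A * Real.exp (-1)) := by ring
      _ ≤ b⁻¹ * (A * Real.exp (-b * ρ)) := by
          apply mul_le_mul_of_nonneg_left _ hb'.le
          exact mul_le_mul_of_nonneg_left hexp hA.le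
  -- IVT for φ ρ = g ρ - ρ
  have hφcont : ContinuousOn (fun ρ => g ρ - ρ) (Icc 0 b⁻¹) :=
    (hgcont.sub continuous_id).continuousOn
  have hmem : (0:ℝ) ∈ Icc ((fun ρ => g ρ - ρ) b⁻¹) ((fun ρ => g ρ - ρ) 0) := by
    constructor
    · have := hgub b⁻¹ ⟨hb'.le, le_refl _⟩
      simp only; linarith
    · have := hgpos 0
      simp only; linarith
  obtain ⟨ρ₁, hρ₁mem, hρ₁eq⟩ := intermediate_value_Icc' hb'.le hφcont hmem
  have hρ₁g : g ρ₁ = ρ₁ := by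
    have h2 : g ρ₁ - ρ₁ = 0 := hρ₁eq
    linarith
  have hρ₁pos : 0 < ρ₁ := by
    rcases lt_or_eq_of_le hρ₁mem.1 with h' | h'
    · exact h'
    · exfalso; rw [← h'] at hρ₁g; linarith [hgpos 0]
  have hρ₁le : ρ₁ ≤ b⁻¹ := hρ₁mem.2
  have hgle : g ρ₁ ≤ ρmax - ε := le_trans (hgub ρ₁ hρ₁mem) hinvb
  refine ⟨⟨ρ₁, ⟨hρ₁pos, hρ₁le⟩, ?_, ?_⟩, ?_⟩
  · rw [hid (g ρ₁) ⟨(hgpos ρ₁).le, hgle⟩] -- h (g ρ₁) = g ρ₁ = ρ₁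
    exact hρ₁g.symm
  · have : ρ₁ < ρmax := lt_of_le_of_lt (le_trans hρ₁le hinvb) (by linarith [hε.1])
    exact this.ne
  · have hge : ρmax ≤ g ρmax := by
      rw [hg]
      rw [le_div_iff₀ (by positivity)]
      linarith [hql]
    rw [hsat (g ρmax) hge]
end

section
/- Let A, b, c > 0 be constants with A ≤ c·exp(2). Then the function F(ρ) := ρ·(c + A·exp(−bρ)) is strictly increasing on [0, ∞). -/
open Set

/-- If `A ≤ c exp 2`, then `F(ρ) = ρ (c + A exp (-b ρ))` is strictly increasing on `[0, ∞)`. -/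
theorem stmt11 (A b c : ℝ) (hA : 0 < A) (hb : 0 < b) (hc : 0 < c)
    (hAc : A ≤ c * Real.exp 2) :
    StrictMonoOn (fun ρ : ℝ => ρ * (c + A * Real.exp (-b * ρ))) (Ici 0) := by
  set F : ℝ → ℝ := fun ρ : ℝ => ρ * (c + A * Real.exp (-b * ρ)) with hF
  set F' : ℝ → ℝ := fun ρ : ℝ => c + A * Real.exp (-b * ρ) * (1 - b * ρ) with hF'
  have hderiv : ∀ ρ : ℝ, HasDerivAt F (F' ρ) ρ := by
    intro ρ
    have h1 : HasDerivAt (fun ρ : ℝ => -b * ρ) (-b) ρ := by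
      simpa using (hasDerivAt_id ρ).const_mul (-b)
    have h2 : HasDerivAt (fun ρ : ℝ => Real.exp (-b * ρ)) (Real.exp (-b * ρ) * (-b)) ρ :=
      h1.exp
    have h3 : HasDerivAt (fun ρ : ℝ => c + A * Real.exp (-b * ρ))
        (A * (Real.exp (-b * ρ) * (-b))) ρ := ((h2.const_mul A).const_add c)
    have h4 : HasDerivAt F
        (1 * (c + A * Real.exp (-b * ρ)) + id ρ * (A * (Real.exp (-b * ρ) * (-b)))) ρ :=
      (hasDerivAt_id ρ).mul h3
    convert h4 using 1
    simp [hF']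
    ring
  have hpos : ∀ ρ : ℝ, b * ρ ≠ 2 → 0 < F' ρ := by
    intro ρ hρ
    have ht : (2 - b * ρ) ≠ 0 := by intro h; apply hρ; linarith
    have h1 : -(2 - b * ρ) + 1 < Real.exp (-(2 - b * ρ)) :=
      Real.add_one_lt_exp (neg_ne_zero.mpr ht)
    have h2 : Real.exp (-b * ρ) = Real.exp (2 - b * ρ) * Real.exp (-2) := by
      rw [← Real.exp_add]; ring_nf
    have h3 : (0:ℝ) < Real.exp (2 - b * ρ) := Real.exp_pos _
    have h4 : Real.exp (-(2 - b * ρ)) * Real.exp (2 - b * ρ) = 1 := by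
      rw [← Real.exp_add]; simp
    have h5 : Real.exp (-2) * Real.exp 2 = 1 := by
      rw [← Real.exp_add]; simp
    have h6 : (0:ℝ) < Real.exp (-2) := Real.exp_pos _
    -- from h1 : exp(2 - bρ) * (1 - (2 - bρ)) < 1, i.e. exp(2-bρ)*(bρ-1) > -1
    have h7 : Real.exp (2 - b * ρ) * (1 - (2 - b * ρ)) < 1 := by
      nlinarith
    -- A * exp(-2) ≤ c
    have h8 : A * Real.exp (-2) ≤ c := by
      nlinarith [Real.exp_pos (2:ℝ)]
    have h9 : A * Real.exp (-2) * (Real.exp (2 - b * ρ) * (1 - (2 - b * ρ))) <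
        A * Real.exp (-2) * 1 := by
      apply mul_lt_mul_of_pos_left h7 (by positivity)
    simp only [hF']
    rw [h2]
    nlinarith
  have hcont : Continuous F := by
    apply Continuous.mul continuous_id
    exact continuous_const.add (continuous_const.mul (Real.continuous_exp.comp
      (continuous_const.mul continuous_id)))
  have key : ∀ x y : ℝ, (∀ ρ ∈ Ioo x y, b * ρ ≠ 2) → StrictMonoOn F (Icc x y) := by
    intro x y h
    apply strictMonoOn_of_hasDerivWithinAt_pos (convex_Icc x y) hcont.continuousOn
      (f' := F')
    · intro ρ hρ
      exact (hderiv ρ).hasDerivWithinAt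
    · intro ρ hρ
      rw [interior_Icc] at hρ
      exact hpos ρ (h ρ hρ)
  intro x hx y hy hxy
  by_cases hz : 2 / b ∈ Ioo x y
  · have hz1 : x < 2 / b := hz.1
    have hz2 : 2 / b < y := hz.2
    have s1 : StrictMonoOn F (Icc x (2 / b)) := by
      apply key; intro ρ hρ h
      have hρeq : ρ = 2 / b := by field_simp; linarith
      rw [hρeq] at hρ; exact lt_irrefl _ hρ.2
    have s2 : StrictMonoOn F (Icc (2 / b) y) := by
      apply key; intro ρ hρ h
      have hρeq : ρ = 2 / b := by field_simp; linarith
      rw [hρeq] at hρ; exact lt_irrefl _ hρ.1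
    have e1 : F x < F (2 / b) :=
      s1 ⟨le_refl x, hz1.le⟩ ⟨hz1.le, le_refl _⟩ hz1
    have e2 : F (2 / b) < F y :=
      s2 ⟨le_refl _, hz2.le⟩ ⟨hz2.le, le_refl y⟩ hz2
    exact e1.trans e2
  · have s : StrictMonoOn F (Icc x y) := by
      apply key; intro ρ hρ h
      apply hz
      have : ρ = 2 / b := by field_simp; linarith [h]
      rwa [← this]
    exact s ⟨le_refl x, hxy.le⟩ ⟨hxy.le, le_refl y⟩ hxy
end

section
/- Let c > 0 and ρ_eq > 0 be constants and let f: ℝ₊ → ℝ be continuous, positive and non-increasing. If the function F(ρ) := ρ·(c + f(ρ)) is strictly increasing on the closed interval [ρ_eq·(c + f(ρ_eq))/(c + f(0)), ρ_eq·(c + f(ρ_eq))/c], then for every v ≥ 0 with v ≠ f(ρ_eq) it holds that (v − f(ρ_eq·(c + f(ρ_eq))/(c + v)))·(v − f(ρ_eq)) > 0. -/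
open Set

/-- If `F(ρ) = ρ (c + f ρ)` is strictly increasing on the interval
`[ρeq (c + f ρeq)/(c + f 0), ρeq (c + f ρeq)/c]`, then the stabilizability inequality
`(v - f(ρeq (c + f ρeq)/(c + v))) (v - f ρeq) > 0` holds for all `v ≥ 0`, `v ≠ f ρeq`. -/
theorem stmt12 (c ρeq : ℝ) (hc : 0 < c) (hρeq : 0 < ρeq)
    (f : ℝ → ℝ) (hfc : ContinuousOn f (Ici 0))
    (hfpos : ∀ x ∈ Ici (0:ℝ), 0 < f x)
    (hfanti : AntitoneOn f (Ici 0))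
    (hF : StrictMonoOn (fun ρ : ℝ => ρ * (c + f ρ))
      (Icc (ρeq * (c + f ρeq) / (c + f 0)) (ρeq * (c + f ρeq) / c))) :
    ∀ v : ℝ, 0 ≤ v → v ≠ f ρeq →
      0 < (v - f (ρeq * (c + f ρeq) / (c + v))) * (v - f ρeq) := by
  intro v hv hvne
  have hf0 : 0 < f 0 := hfpos 0 (mem_Ici.mpr le_rfl)
  have hfρ : 0 < f ρeq := hfpos ρeq (mem_Ici.mpr hρeq.le)
  have hf0ρ : f ρeq ≤ f 0 := hfanti (mem_Ici.mpr le_rfl) (mem_Ici.mpr hρeq.le) hρeq.le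
  set A := ρeq * (c + f ρeq) with hAdef
  have hA : 0 < A := mul_pos hρeq (by linarith)
  have hcv : 0 < c + v := by linarith
  set ρv := A / (c + v) with hρvdef
  have hρv : 0 < ρv := div_pos hA hcv
  have hmul : ρv * (c + v) = A := div_mul_cancel₀ A (ne_of_gt hcv)
  have hρeqeq : ρeq = A / (c + f ρeq) := by
    field_simp [hAdef]
    exact hAdef.symm
  have hρeqmem : ρeq ∈ Icc (A / (c + f 0)) (A / c) := by
    constructor
    · rw [div_le_iff₀ (by linarith)]
      nlinarith
    · rw [le_div_iff₀ hc]
      nlinarith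
  have hρvle : ρv ≤ A / c := by
    rw [hρvdef]
    gcongr
    linarith
  rcases lt_or_gt_of_ne hvne with hlt | hgt
  · -- v < f ρeq : ρv > ρeq, F ρeq < F ρv ⇒ f ρv > v
    have hρvgt : ρeq < ρv := by
      rw [hρeqeq, hρvdef]
      gcongr
    have hρvmem : ρv ∈ Icc (A / (c + f 0)) (A / c) :=
      ⟨le_trans hρeqmem.1 hρvgt.le, hρvle⟩
    have hkey : ρeq * (c + f ρeq) < ρv * (c + f ρv) := hF hρeqmem hρvmem hρvgt
    -- hkey : ρeq * (c + f ρeq) < ρv * (c + f ρv)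
    have hfv : v < f ρv := by nlinarith
    nlinarith
  · -- v > f ρeq
    have hfvlt : f ρv < v := by
      by_cases hvf0 : v ≤ f 0
      · have hρvlt : ρv < ρeq := by
          rw [hρeqeq, hρvdef]
          gcongr
        have hρvmem : ρv ∈ Icc (A / (c + f 0)) (A / c) := by
          refine ⟨?_, hρvle⟩
          rw [hρvdef]
          gcongr
        have hkey : ρv * (c + f ρv) < ρeq * (c + f ρeq) := hF hρvmem hρeqmem hρvlt
        nlinarith [mul_lt_mul_of_pos_left (show f ρv < v from by nlinarith) hρv]
      · push_neg at hvf0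
        have : f ρv ≤ f 0 := hfanti (mem_Ici.mpr le_rfl) (mem_Ici.mpr hρv.le) hρv.le
        linarith
    nlinarith
end

section
/- Let c > 0, μ > 0 and ρ_eq > 0 be constants and let f: ℝ₊ → (0,∞) be C¹, bounded and non-increasing. Assume that (v − f(ρ_eq·(c + f(ρ_eq))/(c + v)))·(v − f(ρ_eq)) > 0 for all v ≥ 0 with v ≠ f(ρ_eq). Let ξ: ℝ₊ → ℝ be a C¹ solution of the scalar ODE ξ̇(t) = −μ·(ξ(t) − f(ρ_eq·(c + f(ρ_eq))/(c + ξ(t)))) with ξ(0) = ξ₀ ≥ 0. Then ξ(t) ≥ 0 for all t ≥ 0, ξ is monotone (non-decreasing if ξ₀ < f(ρ_eq), non-increasing if ξ₀ > f(ρ_eq)), and lim_{t→∞} ξ(t) = f(ρ_eq); i.e., f(ρ_eq) is a globally asymptotically stable equilibrium point of this ODE on ℝ₊. -/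
open Set Filter


lemma aux_upper (ξ φ : ℝ → ℝ) (b : ℝ)
    (hcont : ContinuousOn ξ (Ici 0))
    (hder : ∀ t : ℝ, 0 < t → HasDerivAt ξ (φ (ξ t)) t)
    (hφ : ∀ v, b < v → φ v < 0)
    (h0 : ξ 0 ≤ b) : ∀ t ≥ (0:ℝ), ξ t ≤ b := by
  intro t₁ ht₁
  by_contra hcon
  push_neg at hcon
  set S : Set ℝ := Icc 0 t₁ ∩ ξ ⁻¹' (Iic b) with hS
  have hSne : S.Nonempty := ⟨0, ⟨le_refl 0, ht₁⟩, h0⟩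
  have hSclosed : IsClosed S :=
    (hcont.mono Icc_subset_Ici_self).preimage_isClosed_of_isClosed isClosed_Icc isClosed_Iic
  have hSbdd : BddAbove S := BddAbove.mono inter_subset_left bddAbove_Icc
  obtain ⟨t₂, ⟨⟨ht₂0, ht₂t₁⟩, ht₂b⟩, ht₂ub⟩ : ∃ t₂, t₂ ∈ S ∧ ∀ t ∈ S, t ≤ t₂ :=
    ⟨sSup S, hSclosed.csSup_mem hSne hSbdd, fun t ht => le_csSup hSbdd ht⟩
  have ht₂b' : ξ t₂ ≤ b := ht₂b
  have ht₂lt : t₂ < t₁ :=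
    lt_of_le_of_ne ht₂t₁ (fun h => absurd ht₂b' (by rw [h]; exact not_le.2 hcon))
  have hgt : ∀ t ∈ Ioc t₂ t₁, b < ξ t := by
    rintro t ⟨ht2, ht1⟩
    by_contra hh
    push_neg at hh
    exact absurd (ht₂ub t ⟨⟨le_trans ht₂0 ht2.le, ht1⟩, hh⟩) (not_le.2 ht2)
  have hanti : StrictAntiOn ξ (Icc t₂ t₁) := by
    apply strictAntiOn_of_deriv_neg (convex_Icc _ _)
      (hcont.mono (fun x hx => le_trans ht₂0 hx.1))
    intro t ht
    rw [interior_Icc] at ht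
    rw [(hder t (lt_of_le_of_lt ht₂0 ht.1)).deriv]
    exact hφ _ (hgt t ⟨ht.1, ht.2.le⟩)
  have := hanti (left_mem_Icc.2 ht₂lt.le) (right_mem_Icc.2 ht₂lt.le) ht₂lt
  linarith

lemma aux_lower (ξ φ : ℝ → ℝ) (b B : ℝ) (hBb : B < b)
    (hcont : ContinuousOn ξ (Ici 0))
    (hder : ∀ t : ℝ, 0 < t → HasDerivAt ξ (φ (ξ t)) t)
    (hφ : ∀ v, B < v → v < b → 0 < φ v)
    (h0 : b ≤ ξ 0) : ∀ t ≥ (0:ℝ), b ≤ ξ t := by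
  intro t₁ ht₁
  by_contra hcon
  push_neg at hcon
  set e := (max B (ξ t₁) + b) / 2 with he
  have hm1 : B ≤ max B (ξ t₁) := le_max_left _ _
  have hm2 : ξ t₁ ≤ max B (ξ t₁) := le_max_right _ _
  have hmb : max B (ξ t₁) < b := max_lt hBb hcon
  have heB : B < e := by simp only [he]; linarith
  have heξ : ξ t₁ ≤ e := by simp only [he]; linarith
  have heb : e < b := by simp only [he]; linarith
  set S₁ : Set ℝ := Icc 0 t₁ ∩ ξ ⁻¹' (Iic e) with hS₁
  have hS₁ne : S₁.Nonempty := ⟨t₁, ⟨ht₁, le_refl t₁⟩, heξ⟩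
  have hS₁closed : IsClosed S₁ :=
    (hcont.mono Icc_subset_Ici_self).preimage_isClosed_of_isClosed isClosed_Icc isClosed_Iic
  have hS₁bdd : BddBelow S₁ := BddBelow.mono inter_subset_left bddBelow_Icc
  obtain ⟨T, ⟨⟨hT0, hTt₁⟩, hTe⟩, hTlb⟩ : ∃ T, T ∈ S₁ ∧ ∀ t ∈ S₁, T ≤ t :=
    ⟨sInf S₁, hS₁closed.csInf_mem hS₁ne hS₁bdd, fun t ht => csInf_le hS₁bdd ht⟩
  have hTe' : ξ T ≤ e := hTe
  have hlt : ∀ t ∈ Ico 0 T, e < ξ t := by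
    rintro t ⟨ht0, htT⟩
    by_contra hh
    push_neg at hh
    exact absurd (hTlb t ⟨⟨ht0, htT.le.trans hTt₁⟩, hh⟩) (not_le.2 htT)
  set S₂ : Set ℝ := Icc 0 T ∩ ξ ⁻¹' (Ici b) with hS₂
  have hS₂ne : S₂.Nonempty := ⟨0, ⟨le_refl 0, hT0⟩, h0⟩
  have hS₂closed : IsClosed S₂ :=
    (hcont.mono Icc_subset_Ici_self).preimage_isClosed_of_isClosed isClosed_Icc isClosed_Ici
  have hS₂bdd : BddAbove S₂ := BddAbove.mono inter_subset_left bddAbove_Icc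
  obtain ⟨t₂, ⟨⟨ht₂0, ht₂T⟩, ht₂b⟩, ht₂ub⟩ : ∃ t₂, t₂ ∈ S₂ ∧ ∀ t ∈ S₂, t ≤ t₂ :=
    ⟨sSup S₂, hS₂closed.csSup_mem hS₂ne hS₂bdd, fun t ht => le_csSup hS₂bdd ht⟩
  have ht₂b' : b ≤ ξ t₂ := ht₂b
  have ht₂lt : t₂ < T :=
    lt_of_le_of_ne ht₂T
      (fun h => absurd ht₂b' (by rw [h]; exact not_le.2 (lt_of_le_of_lt hTe' heb)))
  have hub : ∀ t ∈ Ioc t₂ T, ξ t < b := by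
    rintro t ⟨ht2, htT⟩
    by_contra hh
    push_neg at hh
    exact absurd (ht₂ub t ⟨⟨le_trans ht₂0 ht2.le, htT⟩, hh⟩) (not_le.2 ht2)
  have hmono : StrictMonoOn ξ (Icc t₂ T) := by
    apply strictMonoOn_of_deriv_pos (convex_Icc _ _)
      (hcont.mono (fun x hx => le_trans ht₂0 hx.1))
    intro t ht
    rw [interior_Icc] at ht
    rw [(hder t (lt_of_le_of_lt ht₂0 ht.1)).deriv]
    exact hφ _ (lt_trans heB (hlt t ⟨le_trans ht₂0 ht.1.le, ht.2⟩)) (hub t ⟨ht.1, ht.2.le⟩)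
  have := hmono (left_mem_Icc.2 ht₂lt.le) (right_mem_Icc.2 ht₂lt.le) ht₂lt
  linarith

/-- Global asymptotic stability of `f ρeq` for the outlet relaxation ODE
`ξ' = -μ (ξ - f(ρeq (c + f ρeq)/(c + ξ)))` under the sign condition (3.1):
solutions starting at `ξ₀ ≥ 0` remain non-negative, are monotone, and converge
to `f ρeq`. -/
theorem stmt15 (c μ ρeq : ℝ) (hc : 0 < c) (hμ : 0 < μ) (hρeq : 0 < ρeq)
    (f : ℝ → ℝ) (hf : ContDiffOn ℝ 1 f (Ici 0))
    (hfpos : ∀ x ∈ Ici (0:ℝ), 0 < f x)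
    (hfbdd : ∃ M, ∀ x ∈ Ici (0:ℝ), f x ≤ M)
    (hfanti : AntitoneOn f (Ici 0))
    (hsign : ∀ v : ℝ, 0 ≤ v → v ≠ f ρeq →
      0 < (v - f (ρeq * (c + f ρeq) / (c + v))) * (v - f ρeq))
    (ξ : ℝ → ℝ) (ξ₀ : ℝ) (hξ₀ : 0 ≤ ξ₀) (hinit : ξ 0 = ξ₀)
    (hode : ∀ t ∈ Ici (0:ℝ),
      HasDerivWithinAt ξ (-μ * (ξ t - f (ρeq * (c + f ρeq) / (c + ξ t)))) (Ici 0) t) :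
    (∀ t ∈ Ici (0:ℝ), 0 ≤ ξ t) ∧
    (ξ₀ < f ρeq → MonotoneOn ξ (Ici 0)) ∧
    (f ρeq < ξ₀ → AntitoneOn ξ (Ici 0)) ∧
    Tendsto ξ atTop (nhds (f ρeq)) := by
  set φ : ℝ → ℝ := fun v => -μ * (v - f (ρeq * (c + f ρeq) / (c + v))) with hφdef
  have hfρ : 0 < f ρeq := hfpos ρeq hρeq.le
  have hcont : ContinuousOn ξ (Ici 0) := fun t ht => (hode t ht).continuousWithinAt
  have hder : ∀ t : ℝ, 0 < t → HasDerivAt ξ (φ (ξ t)) t := fun t ht =>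
    (hode t ht.le).hasDerivAt (Ici_mem_nhds ht)
  -- sign facts
  have hpos : ∀ v, -c < v → v < f ρeq → 0 < φ v := by
    intro v hv1 hv2
    have hgv : 0 < ρeq * (c + f ρeq) / (c + v) :=
      div_pos (mul_pos hρeq (by linarith)) (by linarith)
    rcases lt_or_ge v 0 with h0 | h0
    · have hfg : 0 < f (ρeq * (c + f ρeq) / (c + v)) := hfpos _ hgv.le
      exact mul_pos_of_neg_of_neg (by linarith) (by linarith)
    · have hs := hsign v h0 (ne_of_lt hv2)
      have h1 : v - f ρeq < 0 := by linarith
      have h2 : v - f (ρeq * (c + f ρeq) / (c + v)) < 0 := by nlinarith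
      exact mul_pos_of_neg_of_neg (by linarith) h2
  have hneg : ∀ v, f ρeq < v → φ v < 0 := by
    intro v hv
    have h0 : 0 ≤ v := le_of_lt (lt_trans hfρ hv)
    have hs := hsign v h0 (ne_of_gt hv)
    have h1 : 0 < v - f ρeq := by linarith
    have h2 : 0 < v - f (ρeq * (c + f ρeq) / (c + v)) := by nlinarith
    exact mul_neg_of_neg_of_pos (by linarith) h2
  have hφeq : φ (f ρeq) = 0 := by
    have h : ρeq * (c + f ρeq) / (c + f ρeq) = ρeq :=
      mul_div_cancel_right₀ ρeq (by linarith)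
    simp [hφdef, h]
  have hξ0 : ξ 0 = ξ₀ := hinit
  -- nonnegativity
  have hnonneg : ∀ t ≥ (0:ℝ), 0 ≤ ξ t :=
    aux_lower ξ φ 0 (-c) (by linarith) hcont hder
      (fun v h1 h2 => hpos v h1 (h2.trans hfρ)) (by rw [hξ0]; exact hξ₀)
  -- monotone case
  have hmono : ξ₀ < f ρeq → MonotoneOn ξ (Ici 0) := by
    intro hlt
    have hub : ∀ t ≥ (0:ℝ), ξ t ≤ f ρeq :=
      aux_upper ξ φ (f ρeq) hcont hder hneg (by rw [hξ0]; exact hlt.le)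
    apply monotoneOn_of_deriv_nonneg (convex_Ici 0) hcont
    · intro t ht
      rw [interior_Ici] at ht
      exact (hder t ht).differentiableAt.differentiableWithinAt
    · intro t ht
      rw [interior_Ici] at ht
      rw [(hder t ht).deriv]
      rcases lt_or_eq_of_le (hub t ht.le) with h | h
      · exact (hpos _ (lt_of_lt_of_le (by linarith) (hnonneg t ht.le)) h).le
      · rw [h, hφeq]
  have hanti : f ρeq < ξ₀ → AntitoneOn ξ (Ici 0) := by
    intro hgt
    have hlb : ∀ t ≥ (0:ℝ), f ρeq ≤ ξ t :=
      aux_lower ξ φ (f ρeq) (-c) (by linarith) hcont hder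
        (fun v h1 h2 => hpos v h1 h2) (by rw [hξ0]; exact hgt.le)
    apply antitoneOn_of_deriv_nonpos (convex_Ici 0) hcont
    · intro t ht
      rw [interior_Ici] at ht
      exact (hder t ht).differentiableAt.differentiableWithinAt
    · intro t ht
      rw [interior_Ici] at ht
      rw [(hder t ht).deriv]
      rcases eq_or_lt_of_le (hlb t ht.le) with h | h
      · rw [← h, hφeq]
      · exact (hneg _ h).le
  refine ⟨fun t ht => hnonneg t ht, hmono, hanti, ?_⟩
  -- continuity of φ on compact subsets of [0, ∞)
  have hφcont : ∀ a b : ℝ, 0 ≤ a → ContinuousOn φ (Icc a b) := by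
    intro a b ha
    have hgcont : ContinuousOn (fun v => ρeq * (c + f ρeq) / (c + v)) (Icc a b) := by
      apply ContinuousOn.div continuousOn_const
        (continuous_const.add continuous_id').continuousOn
      intro v hv
      have h1 := hv.1
      intro h
      simp only [Pi.add_apply] at h
      linarith
    have hmap : MapsTo (fun v => ρeq * (c + f ρeq) / (c + v)) (Icc a b) (Ici 0) := by
      intro v hv
      have := hv.1
      exact le_of_lt (div_pos (mul_pos hρeq (by linarith)) (by linarith))
    have hfg : ContinuousOn (fun v => f (ρeq * (c + f ρeq) / (c + v))) (Icc a b) :=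
      (hf.continuousOn).comp hgcont hmap
    exact continuousOn_const.mul (continuousOn_id.sub hfg)
  rcases lt_trichotomy ξ₀ (f ρeq) with hlt | heq | hgt
  · -- monotone increasing to f ρeq
    have hm := hmono hlt
    have hub : ∀ t ≥ (0:ℝ), ξ t ≤ f ρeq :=
      aux_upper ξ φ (f ρeq) hcont hder hneg (by rw [hξ0]; exact hlt.le)
    have hne : (ξ '' Ici 0).Nonempty := ⟨ξ 0, mem_image_of_mem _ self_mem_Ici⟩
    have hbdd : BddAbove (ξ '' Ici 0) := by
      refine ⟨f ρeq, ?_⟩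
      rintro x ⟨t, ht, rfl⟩
      exact hub t ht
    set L := sSup (ξ '' Ici 0) with hLdef
    have hLle : L ≤ f ρeq := csSup_le hne (by rintro x ⟨t, ht, rfl⟩; exact hub t ht)
    have hξL : ∀ t ≥ (0:ℝ), ξ t ≤ L := fun t ht => le_csSup hbdd (mem_image_of_mem _ ht)
    have htend : Tendsto ξ atTop (nhds L) := by
      rw [tendsto_order]
      constructor
      · intro a ha
        obtain ⟨x, ⟨t₀, ht₀, rfl⟩, hax⟩ := exists_lt_of_lt_csSup hne ha
        filter_upwards [eventually_ge_atTop t₀] with t ht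
        exact lt_of_lt_of_le hax (hm ht₀ (le_trans ht₀ ht) ht)
      · intro a ha
        filter_upwards [eventually_ge_atTop 0] with t ht
        exact lt_of_le_of_lt (hξL t ht) ha
    have hLeq : L = f ρeq := by
      by_contra hne'
      have hLlt : L < f ρeq := lt_of_le_of_ne hLle hne'
      have hξ0L : ξ₀ ≤ L := by rw [← hξ0]; exact hξL 0 le_rfl
      obtain ⟨v₀, hv₀K, hv₀min⟩ :=
        isCompact_Icc.exists_isMinOn (nonempty_Icc.2 hξ0L) (hφcont ξ₀ L hξ₀)
      have hδ : 0 < φ v₀ :=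
        hpos v₀ (by have := hv₀K.1; linarith) (lt_of_le_of_lt hv₀K.2 hLlt)
      set δ := φ v₀ with hδdef
      set T := (L - ξ₀) / δ + 1 with hT
      have hT0 : 0 ≤ T := by
        rw [hT]
        have : 0 ≤ (L - ξ₀) / δ := div_nonneg (by linarith) hδ.le
        linarith
      have hmono2 : MonotoneOn (fun t => ξ t - δ * t) (Ici 0) := by
        apply monotoneOn_of_deriv_nonneg (convex_Ici 0)
          (hcont.sub (continuous_const.mul continuous_id').continuousOn)
        · intro t ht
          rw [interior_Ici] at ht
          exact ((hder t ht).sub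
            ((hasDerivAt_id t).const_mul δ)).differentiableAt.differentiableWithinAt
        · intro t ht
          rw [interior_Ici] at ht
          have hd : HasDerivAt (fun t => ξ t - δ * t) (φ (ξ t) - δ * 1) t :=
            (hder t ht).sub ((hasDerivAt_id t).const_mul δ)
          change 0 ≤ deriv (fun t => ξ t - δ * t) t
          rw [hd.deriv]
          have hK : ξ t ∈ Icc ξ₀ L :=
            ⟨by rw [← hξ0]; exact hm self_mem_Ici (mem_Ici.2 ht.le) ht.le, hξL t ht.le⟩
          have := isMinOn_iff.1 hv₀min (ξ t) hK
          linarith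
      have hkey := hmono2 self_mem_Ici (mem_Ici.2 hT0) hT0
      simp only at hkey
      have hδT : δ * T = (L - ξ₀) + δ := by
        rw [hT, mul_add, mul_one, mul_div_cancel₀ _ (ne_of_gt hδ)]
      have hTub := hξL T hT0
      rw [hξ0] at hkey
      linarith
    rw [← hLeq]
    exact htend
  · -- constant solution
    have hub : ∀ t ≥ (0:ℝ), ξ t ≤ f ρeq :=
      aux_upper ξ φ (f ρeq) hcont hder hneg (by rw [hξ0, heq])
    have hlb : ∀ t ≥ (0:ℝ), f ρeq ≤ ξ t :=
      aux_lower ξ φ (f ρeq) (-c) (by linarith) hcont hder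
        (fun v h1 h2 => hpos v h1 h2) (by rw [hξ0, heq])
    have : (fun _ : ℝ => f ρeq) =ᶠ[atTop] ξ := by
      filter_upwards [eventually_ge_atTop (0:ℝ)] with t ht
      exact (le_antisymm (hub t ht) (hlb t ht)).symm
    exact Tendsto.congr' this tendsto_const_nhds
  · -- monotone decreasing to f ρeq
    have hm := hanti hgt
    have hlb : ∀ t ≥ (0:ℝ), f ρeq ≤ ξ t :=
      aux_lower ξ φ (f ρeq) (-c) (by linarith) hcont hder
        (fun v h1 h2 => hpos v h1 h2) (by rw [hξ0]; exact hgt.le)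
    have hne : (ξ '' Ici 0).Nonempty := ⟨ξ 0, mem_image_of_mem _ self_mem_Ici⟩
    have hbdd : BddBelow (ξ '' Ici 0) := by
      refine ⟨f ρeq, ?_⟩
      rintro x ⟨t, ht, rfl⟩
      exact hlb t ht
    set L := sInf (ξ '' Ici 0) with hLdef
    have hLge : f ρeq ≤ L := le_csInf hne (by rintro x ⟨t, ht, rfl⟩; exact hlb t ht)
    have hξL : ∀ t ≥ (0:ℝ), L ≤ ξ t := fun t ht => csInf_le hbdd (mem_image_of_mem _ ht)
    have htend : Tendsto ξ atTop (nhds L) := by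
      rw [tendsto_order]
      constructor
      · intro a ha
        filter_upwards [eventually_ge_atTop 0] with t ht
        exact lt_of_lt_of_le ha (hξL t ht)
      · intro a ha
        obtain ⟨x, ⟨t₀, ht₀, rfl⟩, hax⟩ := exists_lt_of_csInf_lt hne ha
        filter_upwards [eventually_ge_atTop t₀] with t ht
        exact lt_of_le_of_lt (hm ht₀ (le_trans ht₀ ht) ht) hax
    have hLeq : L = f ρeq := by
      by_contra hne'
      have hLgt : f ρeq < L := lt_of_le_of_ne hLge (Ne.symm hne')
      have hξ0L : L ≤ ξ₀ := by rw [← hξ0]; exact hξL 0 le_rfl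
      have hL0 : 0 ≤ L := by linarith
      obtain ⟨v₀, hv₀K, hv₀max⟩ :=
        isCompact_Icc.exists_isMaxOn (nonempty_Icc.2 hξ0L) (hφcont L ξ₀ hL0)
      have hδ : φ v₀ < 0 := hneg v₀ (lt_of_lt_of_le hLgt hv₀K.1)
      set δ := -φ v₀ with hδdef
      have hδ0 : 0 < δ := by rw [hδdef]; linarith
      set T := (ξ₀ - L) / δ + 1 with hT
      have hT0 : 0 ≤ T := by
        rw [hT]
        have : 0 ≤ (ξ₀ - L) / δ := div_nonneg (by linarith) hδ0.le
        linarith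
      have hanti2 : AntitoneOn (fun t => ξ t + δ * t) (Ici 0) := by
        apply antitoneOn_of_deriv_nonpos (convex_Ici 0)
          (hcont.add (continuous_const.mul continuous_id').continuousOn)
        · intro t ht
          rw [interior_Ici] at ht
          exact ((hder t ht).add
            ((hasDerivAt_id t).const_mul δ)).differentiableAt.differentiableWithinAt
        · intro t ht
          rw [interior_Ici] at ht
          have hd : HasDerivAt (fun t => ξ t + δ * t) (φ (ξ t) + δ * 1) t :=
            (hder t ht).add ((hasDerivAt_id t).const_mul δ)
          change deriv (fun t => ξ t + δ * t) t ≤ 0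
          rw [hd.deriv]
          have hK : ξ t ∈ Icc L ξ₀ :=
            ⟨hξL t ht.le, by rw [← hξ0]; exact hm self_mem_Ici (mem_Ici.2 ht.le) ht.le⟩
          have := isMaxOn_iff.1 hv₀max (ξ t) hK
          simp only [hδdef]
          linarith
      have hkey := hanti2 self_mem_Ici (mem_Ici.2 hT0) hT0
      simp only at hkey
      have hδT : δ * T = (ξ₀ - L) + δ := by
        rw [hT, mul_add, mul_one, mul_div_cancel₀ _ (ne_of_gt hδ0)]
      have hTlb := hξL T hT0
      rw [hξ0] at hkey
      linarith
    rw [← hLeq]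
    exact htend
end

section
/- Let N ≥ 1 and m ≥ 1 be integers, let c > 0, μ ≥ 0, λ > 0, δ > 0 and v_max > 0 be constants with λ·c ≤ 1 and μ·δ ≤ 1, and let g: ℝ₊ × ℝ → ℝ satisfy 0 < g(0,w) ≤ g(v,w) ≤ v_max for all v ≥ 0, w ∈ ℝ. Let a: {0,…,m} × ℝ₊ → ℝ be a function, let real numbers v_i(k), w_i(k) for i = 0,…,N, k = 0,…,m satisfy the recursions w_i(k+1) = (1 − λ·v_i(k))·w_i(k) + λ·v_i(k)·w_{i−1}(k) for i = 1,…,N; v_i(k+1) = (1 − λc)·v_i(k) + λc·v_{i+1}(k) for i = 0,…,N−1; v_N(k+1) = (1 − μδ)·v_N(k) + μδ·g(v_N(k), w_N(k)); and w_0(k) = a(k, v_0(k)), for all k = 0,…,m−1. Assume 0 ≤ v_i(0) for all i and λ·V̄ ≤ 1, where V̄ := max(max_{i} v_i(0), v_max). Define W := max(max_i |w_i(0)|, B) with B := max{|a(k,v)| : k ∈ {0,…,m}, 0 ≤ v ≤ V̄}. Then for all i = 0,…,N and k = 0,…,m: (i) 0 ≤ v_i(k) ≤ V̄; (ii) |w_i(k)|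 ≤ W; (iii) v_i(k) ≥ min(min_j v_j(0), min{g(0,w) : |w| ≤ W}). -/
open Set

lemma convex_bound17 {t a b lo hi : ℝ} (ht0 : 0 ≤ t) (ht1 : t ≤ 1)
    (ha : lo ≤ a) (ha' : a ≤ hi) (hb : lo ≤ b) (hb' : b ≤ hi) :
    lo ≤ (1 - t) * a + t * b ∧ (1 - t) * a + t * b ≤ hi :=
  ⟨by nlinarith, by nlinarith⟩

lemma convex_abs17 {t a b W : ℝ} (ht0 : 0 ≤ t) (ht1 : t ≤ 1)
    (ha : |a| ≤ W) (hb : |b| ≤ W) : |(1 - t) * a + t * b| ≤ W := by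
  rw [abs_le] at *
  exact ⟨by nlinarith [ha.1, ha.2, hb.1, hb.2], by nlinarith [ha.1, ha.2, hb.1, hb.2]⟩

/-- Invariance properties of the explicit upwind finite-difference discretization of the
coupled hyperbolic system `∂w/∂t + v ∂w/∂x = 0`, `∂v/∂t - c ∂v/∂x = 0` with inlet
condition `w = a(k, v)` at `i = 0` and relaxation-type outlet condition at `i = N`:
under the CFL-type conditions `λ c ≤ 1`, `μ δ ≤ 1`, `λ V̄ ≤ 1`,
(i) `0 ≤ v_i(k) ≤ V̄`, (ii) `|w_i(k)| ≤ W`, and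
(iii) `v_i(k) ≥ min (min_j v_j(0)) (inf {g(0,w) : |w| ≤ W})`. -/
theorem stmt17 (N m : ℕ) (hN : 1 ≤ N) (hm : 1 ≤ m)
    (c μ lam δ vmax : ℝ) (hc : 0 < c) (hμ : 0 ≤ μ) (hlam : 0 < lam) (hδ : 0 < δ)
    (hvmax : 0 < vmax) (hcfl1 : lam * c ≤ 1) (hcfl2 : μ * δ ≤ 1)
    (g : ℝ → ℝ → ℝ)
    (hg : ∀ u : ℝ, 0 ≤ u → ∀ z : ℝ, 0 < g 0 z ∧ g 0 z ≤ g u z ∧ g u z ≤ vmax)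
    (a : ℕ → ℝ → ℝ) (v w : ℕ → ℕ → ℝ)
    (hrecw : ∀ k < m, ∀ i, 1 ≤ i → i ≤ N →
      w i (k + 1) = (1 - lam * v i k) * w i k + lam * v i k * w (i - 1) k)
    (hrecv : ∀ k < m, ∀ i < N,
      v i (k + 1) = (1 - lam * c) * v i k + lam * c * v (i + 1) k)
    (hrecvN : ∀ k < m, v N (k + 1) = (1 - μ * δ) * v N k + μ * δ * g (v N k) (w N k))
    (hbcw : ∀ k ≤ m, w 0 k = a k (v 0 k))
    (hv0 : ∀ i ≤ N, 0 ≤ v i 0)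
    (Vb : ℝ)
    (hVb : Vb = max
      ((Finset.range (N + 1)).sup'
        (Finset.nonempty_range_iff.mpr (Nat.succ_ne_zero N)) fun i => v i 0) vmax)
    (hcfl3 : lam * Vb ≤ 1)
    (hBdd : BddAbove {y : ℝ | ∃ k ≤ m, ∃ u ∈ Icc (0:ℝ) Vb, y = |a k u|})
    (B W : ℝ)
    (hB : B = sSup {y : ℝ | ∃ k ≤ m, ∃ u ∈ Icc (0:ℝ) Vb, y = |a k u|})
    (hW : W = max
      ((Finset.range (N + 1)).sup'
        (Finset.nonempty_range_iff.mpr (Nat.succ_ne_zero N)) fun i => |w i 0|) B) :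
    ∀ k ≤ m, ∀ i ≤ N,
      (0 ≤ v i k ∧ v i k ≤ Vb) ∧
      |w i k| ≤ W ∧
      min
        ((Finset.range (N + 1)).inf'
          (Finset.nonempty_range_iff.mpr (Nat.succ_ne_zero N)) fun j => v j 0)
        (sInf {y : ℝ | ∃ z : ℝ, |z| ≤ W ∧ y = g 0 z}) ≤ v i k := by
  have hne : (Finset.range (N+1)).Nonempty := Finset.nonempty_range_iff.mpr (Nat.succ_ne_zero N)
  have hVbmax : vmax ≤ Vb := hVb ▸ le_max_right _ _
  have hVbpos : 0 < Vb := lt_of_lt_of_le hvmax hVbmax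
  have hv0Vb : ∀ i ≤ N, v i 0 ≤ Vb := by
    intro i hi
    rw [hVb]
    exact le_max_of_le_left (Finset.le_sup' (fun i => v i 0) (Finset.mem_range.mpr (Nat.lt_succ_of_le hi)))
  have hw0W : ∀ i ≤ N, |w i 0| ≤ W := by
    intro i hi
    rw [hW]
    exact le_max_of_le_left (Finset.le_sup' (fun i => |w i 0|) (Finset.mem_range.mpr (Nat.lt_succ_of_le hi)))
  have hW0 : 0 ≤ W := le_trans (abs_nonneg _) (hw0W 0 (Nat.zero_le N))
  have hSbdd : BddBelow {y : ℝ | ∃ z : ℝ, |z| ≤ W ∧ y = g 0 z} := by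
    refine ⟨0, ?_⟩
    rintro y ⟨z, hz, rfl⟩
    exact le_of_lt (hg 0 le_rfl z).1
  have hSle : ∀ z : ℝ, |z| ≤ W → sInf {y : ℝ | ∃ z : ℝ, |z| ≤ W ∧ y = g 0 z} ≤ g 0 z :=
    fun z hz => csInf_le hSbdd ⟨z, hz, rfl⟩
  have hBle : ∀ k ≤ m, ∀ u : ℝ, 0 ≤ u → u ≤ Vb → |a k u| ≤ B := by
    intro k hk u hu1 hu2
    rw [hB]
    exact le_csSup hBdd ⟨k, hk, u, ⟨hu1, hu2⟩, rfl⟩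
  have hBW : B ≤ W := hW ▸ le_max_right _ _
  have hlc0 : 0 ≤ lam * c := le_of_lt (mul_pos hlam hc)
  have hmd0 : 0 ≤ μ * δ := mul_nonneg hμ (le_of_lt hδ)
  set M := min
      ((Finset.range (N + 1)).inf'
        (Finset.nonempty_range_iff.mpr (Nat.succ_ne_zero N)) fun j => v j 0)
      (sInf {y : ℝ | ∃ z : ℝ, |z| ≤ W ∧ y = g 0 z}) with hMdef
  have hMv0 : ∀ j ≤ N, M ≤ v j 0 := by
    intro j hj
    exact le_trans (min_le_left _ _)
      (Finset.inf'_le _ (Finset.mem_range.mpr (Nat.lt_succ_of_le hj)))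
  have hMS : ∀ z : ℝ, |z| ≤ W → M ≤ g 0 z :=
    fun z hz => le_trans (min_le_right _ _) (hSle z hz)
  intro k
  induction k with
  | zero =>
    intro _ i hi
    exact ⟨⟨hv0 i hi, hv0Vb i hi⟩, hw0W i hi, hMv0 i hi⟩
  | succ k ih =>
    intro hk
    have hkm : k < m := hk
    have IH := ih (le_of_lt hkm)
    -- v bounds at k+1
    have hv1 : ∀ i ≤ N, (0 ≤ v i (k+1) ∧ v i (k+1) ≤ Vb) ∧ M ≤ v i (k+1) := by
      intro i hi
      rcases eq_or_lt_of_le hi with hiN | hiN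
      · -- outlet i = N
        obtain ⟨⟨hvN0, hvNVb⟩, hwN, hMN⟩ := IH N le_rfl
        obtain ⟨hg1, hg2, hg3⟩ := hg (v N k) hvN0 (w N k)
        have hgM : M ≤ g (v N k) (w N k) := le_trans (hMS _ hwN) hg2
        have hg0 : 0 ≤ g (v N k) (w N k) := le_trans (le_of_lt hg1) hg2
        have hgVb : g (v N k) (w N k) ≤ Vb := le_trans hg3 hVbmax
        rw [hiN, hrecvN k hkm]
        obtain ⟨h1, h2⟩ := convex_bound17 hmd0 hcfl2 hvN0 hvNVb hg0 hgVb
        obtain ⟨h3, _⟩ := convex_bound17 hmd0 hcfl2 hMN hvNVb hgM hgVb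
        exact ⟨⟨h1, h2⟩, h3⟩
      · -- interior i < N
        obtain ⟨⟨hvi0, hviVb⟩, _, hMi⟩ := IH i hi
        obtain ⟨⟨hvj0, hvjVb⟩, _, hMj⟩ := IH (i+1) hiN
        rw [hrecv k hkm i hiN]
        obtain ⟨h1, h2⟩ := convex_bound17 hlc0 hcfl1 hvi0 hviVb hvj0 hvjVb
        obtain ⟨h3, _⟩ := convex_bound17 hlc0 hcfl1 hMi hviVb hMj hvjVb
        exact ⟨⟨h1, h2⟩, h3⟩
    intro i hi
    refine ⟨(hv1 i hi).1, ?_, (hv1 i hi).2⟩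
    -- w bound at k+1
    rcases Nat.eq_zero_or_pos i with hi0 | hi1
    · subst hi0
      rw [hbcw (k+1) hk]
      obtain ⟨⟨h0, h1⟩, _⟩ := hv1 0 (Nat.zero_le N)
      exact le_trans (hBle (k+1) hk _ h0 h1) hBW
    · obtain ⟨⟨hvi0, hviVb⟩, hwi, _⟩ := IH i hi
      have hwj : |w (i-1) k| ≤ W := (IH (i-1) (le_trans (Nat.sub_le i 1) hi)).2.1
      have ht0 : 0 ≤ lam * v i k := mul_nonneg (le_of_lt hlam) hvi0
      have ht1 : lam * v i k ≤ 1 :=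
        le_trans (mul_le_mul_of_nonneg_left hviVb (le_of_lt hlam)) hcfl3
      rw [hrecw k hkm i hi1 hi]
      exact convex_abs17 ht0 ht1 hwi hwj
end

section
/- Let N ≥ 2 and m ≥ 1 be integers, let c > 0, μ ≥ 0, λ > 0 and K ≥ 0 be constants with λ·c ≤ 1, and let real numbers p_i(k) for i = 0,…,N−1, k = 0,…,m satisfy p_i(k+1) = (1 − λc)·p_i(k) + λc·p_{i+1}(k) for i = 0,…,N−2 and |p_{N−1}(k+1)| ≤ (1 − λc)·|p_{N−1}(k)| + μ·λ·K, for all k = 0,…,m−1. Then max_{i=0,…,N−1} |p_i(k)| ≤ max_{i=0,…,N−1} |p_i(0)| + c⁻¹·μ·K for all k = 0,…,m. -/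
/-- Uniform bound for the divided differences of the finite-difference scheme for the
backward transport equation `∂v/∂t - c ∂v/∂x = 0` with a relaxation-type outlet
boundary contribution bounded by `μ λ K`. -/
theorem stmt18 (N m : ℕ) (hN : 2 ≤ N) (hm : 1 ≤ m) (c μ lam K : ℝ)
    (hc : 0 < c) (hμ : 0 ≤ μ) (hlam : 0 < lam) (hK : 0 ≤ K) (hcfl : lam * c ≤ 1)
    (p : ℕ → ℕ → ℝ)
    (hrec : ∀ k < m, ∀ i, i + 2 ≤ N →
      p i (k + 1) = (1 - lam * c) * p i k + lam * c * p (i + 1) k)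
    (hbnd : ∀ k < m, |p (N - 1) (k + 1)| ≤ (1 - lam * c) * |p (N - 1) k| + μ * lam * K) :
    ∀ k ≤ m, ∀ i < N, |p i k| ≤
      ((Finset.range N).sup' (Finset.nonempty_range_iff.mpr (by omega)) fun j => |p j 0|)
        + c⁻¹ * μ * K := by
  set M := (Finset.range N).sup' (Finset.nonempty_range_iff.mpr (by omega)) fun j => |p j 0|
    with hMdef
  have hle0 : ∀ i < N, |p i 0| ≤ M := by
    intro i hi
    exact Finset.le_sup' (fun j => |p j 0|) (Finset.mem_range.mpr hi)
  have hM0 : 0 ≤ M := le_trans (abs_nonneg _) (hle0 0 (by omega))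
  have hX0 : 0 ≤ c⁻¹ * μ * K := by positivity
  have hlc0 : 0 < lam * c := mul_pos hlam hc
  have hcc : c * c⁻¹ = 1 := mul_inv_cancel₀ hc.ne'
  intro k
  induction k with
  | zero =>
    intro _ i hi
    exact le_trans (hle0 i hi) (by linarith)
  | succ k ih =>
    intro hk i hi
    have hk' : k < m := by omega
    have ih' := ih (by omega)
    by_cases hint : i + 2 ≤ N
    · rw [hrec k hk' i hint]
      have h1 : |p i k| ≤ M + c⁻¹ * μ * K := ih' i (by omega)
      have h2 : |p (i+1) k| ≤ M + c⁻¹ * μ * K := ih' (i+1) (by omega)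
      calc |(1 - lam * c) * p i k + lam * c * p (i + 1) k|
          ≤ |(1 - lam * c) * p i k| + |lam * c * p (i + 1) k| := abs_add_le _ _
        _ = (1 - lam * c) * |p i k| + lam * c * |p (i + 1) k| := by
            rw [abs_mul, abs_mul, abs_of_nonneg (by linarith), abs_of_nonneg hlc0.le]
        _ ≤ (1 - lam * c) * (M + c⁻¹ * μ * K) + lam * c * (M + c⁻¹ * μ * K) := by
            gcongr <;> linarith
        _ = M + c⁻¹ * μ * K := by ring
    · have hiN : i = N - 1 := by omega
      subst hiN
      have hb := hbnd k hk'
      have h1 : |p (N - 1) k| ≤ M + c⁻¹ * μ * K := ih' (N - 1) (by omega)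
      have key : lam * c * (c⁻¹ * μ * K) = lam * (μ * K) := by
        field_simp
      nlinarith [mul_le_mul_of_nonneg_left h1 (show (0:ℝ) ≤ 1 - lam * c by linarith),
        mul_nonneg hlc0.le hM0]
end
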